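/- arXiv:2405.18102 — 12 statements merged into one kernel-verified Lean document; each statement's English description precedes it below -/
import Mathlib

section
/- For every election instance with exactly two parties, there exists a seat assignment that satisfies the obtainable weighted-seat lower quota (WLQ°), i.e., each party p receives total seat weight at least ℓ°(p). -/
open Finset

/-- Total weight of the seats assigned to party `p` under assignment `s`. -/
def rep {m k : ℕ} (w : Fin k → ℕ) (s : Fin k → Fin m) (p : Fin m) : ℕ :=
  ∑ t, if s t = p then w t else 0

/-- The quota of party `p`: total weight times its vote share. -/
def quota {m k : ℕ} (n : ℕ) (v : Fin m → ℕ) (w : Fin k → ℕ) (p : Fin m) : ℚ :=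
  (∑ t, (w t : ℚ)) * (v p : ℚ) / (n : ℚ)

/-- Total weight assigned to party `p` in rounds before round `t`. -/
def gw {m k : ℕ} (w : Fin k → ℕ) (s : Fin k → Fin m) (t : Fin k) (p : Fin m) : ℕ :=
  ∑ t' ∈ Finset.univ.filter (fun t' => t' < t), if s t' = p then w t' else 0

/-- For every two-party instance there is a seat assignment satisfying WLQ°:
each party's representation is at least every subset-sum of at most ℓ#(p) seats
whose total weight is at most q(p) (i.e. at least ℓ°(p)). -/
theorem stmt0 (n k : ℕ) (v : Fin 2 → ℕ) (w : Fin k → ℕ)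
    (hv : ∀ p, 1 ≤ v p) (hn : ∑ p, v p = n)
    (hw : ∀ t, 1 ≤ w t) (hmono : ∀ i j : Fin k, i ≤ j → w j ≤ w i) :
    ∃ s : Fin k → Fin 2, ∀ p : Fin 2, ∀ T : Finset (Fin k),
      T.card ≤ (k * v p) / n →
      ((∑ t ∈ T, w t : ℕ) : ℚ) ≤ quota n v w p →
      (∑ t ∈ T, w t) ≤ rep w s p := by
  classical
  have hn0 : 0 < n := by
    rw [Fin.sum_univ_two] at hn
    have h0 := hv 0; have h1 := hv 1; omega
  -- the set of "valid" subsets for party 0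
  set S : Finset (Finset (Fin k)) :=
    Finset.univ.filter (fun T => T.card ≤ (k * v 0) / n ∧
      ((∑ t ∈ T, w t : ℕ) : ℚ) ≤ quota n v w 0) with hS
  have hne : S.Nonempty := by
    refine ⟨∅, ?_⟩
    simp only [hS, Finset.mem_filter, Finset.mem_univ, true_and]
    constructor
    · simp
    · simp only [Finset.sum_empty, Nat.cast_zero]
      unfold quota
      positivity
  obtain ⟨T₀, hT₀S, hT₀max⟩ := S.exists_max_image (fun T => ∑ t ∈ T, w t) hne
  have hT₀ := (Finset.mem_filter.mp hT₀S).2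
  refine ⟨fun t => if t ∈ T₀ then 0 else 1, ?_⟩
  have hrep0 : rep w (fun t => if t ∈ T₀ then (0 : Fin 2) else 1) 0 = ∑ t ∈ T₀, w t := by
    unfold rep
    rw [← Finset.sum_filter]
    congr 1
    ext t
    by_cases h : t ∈ T₀ <;> simp [h]
  have hrep1 : rep w (fun t => if t ∈ T₀ then (0 : Fin 2) else 1) 1 = ∑ t ∈ T₀ᶜ, w t := by
    unfold rep
    rw [← Finset.sum_filter]
    congr 1
    ext t
    by_cases h : t ∈ T₀ <;> simp [h]
  have hquota : quota n v w 0 + quota n v w 1 = ∑ t, (w t : ℚ) := by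
    unfold quota
    have : ((v 0 : ℚ) + (v 1 : ℚ)) = (n : ℚ) := by
      rw [Fin.sum_univ_two] at hn
      exact_mod_cast congrArg (Nat.cast : ℕ → ℚ) hn
    field_simp
    linear_combination (∑ t, (w t : ℚ)) * this
  intro p T hc hq
  obtain rfl | rfl : p = 0 ∨ p = 1 := by omega
  · rw [hrep0]
    exact hT₀max T (Finset.mem_filter.mpr ⟨Finset.mem_univ _, hc, hq⟩)
  · rw [hrep1]
    -- rational inequality
    have hsum : ((∑ t ∈ T₀, w t : ℕ) : ℚ) + ((∑ t ∈ T₀ᶜ, w t : ℕ) : ℚ) = ∑ t, (w t : ℚ) := by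
      push_cast
      rw [Finset.sum_add_sum_compl]
    have h1 : ((∑ t ∈ T, w t : ℕ) : ℚ) ≤ ((∑ t ∈ T₀ᶜ, w t : ℕ) : ℚ) := by
      have := hT₀.2
      linarith [hq, this, hquota, hsum]
    exact_mod_cast h1
end

section
/- The obtainable weighted-seat lower quota WLQ° implies weighted lower quota up to one seat (WLQ-1): if a seat assignment s satisfies rep(p,s) ≥ ℓ°(p) for every party p, then for every party p, either rep(p,s) ≥ q(p), or there exists a seat t not assigned to p with rep(p,s) + w_t > q(p). -/
open Finset

/-- Sum of the weights of the first `j` seats. -/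
def pref {k : ℕ} (w : Fin k → ℕ) (j : ℕ) : ℕ :=
  ∑ i ∈ Finset.univ.filter (fun i : Fin k => (i : ℕ) < j), w i

lemma card_lt_filter (k j : ℕ) (hj : j ≤ k) :
    (Finset.univ.filter (fun i : Fin k => (i : ℕ) < j)).card = j := by
  have h : (Finset.univ.filter (fun i : Fin k => (i : ℕ) < j)) =
      (Finset.range j).attachFin
        (fun x hx => lt_of_lt_of_le (Finset.mem_range.mp hx) hj) := by
    ext i
    simp [Finset.mem_attachFin, Finset.mem_range]
  rw [h, Finset.card_attachFin, Finset.card_range]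

lemma pref_succ {k : ℕ} (w : Fin k → ℕ) (j : ℕ) (hj : j < k) :
    pref w (j + 1) = pref w j + w ⟨j, hj⟩ := by
  have h : Finset.univ.filter (fun i : Fin k => (i : ℕ) < j + 1) =
      insert (⟨j, hj⟩ : Fin k) (Finset.univ.filter (fun i : Fin k => (i : ℕ) < j)) := by
    ext i
    simp only [Finset.mem_filter, Finset.mem_univ, true_and, Finset.mem_insert, Fin.ext_iff]
    omega
  rw [pref, h, Finset.sum_insert (by simp), pref]
  omega

/-- WLQ° implies WLQ-1. -/
theorem stmt2 (n k m : ℕ) (v : Fin m → ℕ) (w : Fin k → ℕ)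
    (hv : ∀ p, 1 ≤ v p) (hn : ∑ p, v p = n)
    (hw : ∀ t, 1 ≤ w t) (hmono : ∀ i j : Fin k, i ≤ j → w j ≤ w i)
    (s : Fin k → Fin m)
    (hWLQo : ∀ p, ∀ T : Finset (Fin k), T.card ≤ (k * v p) / n →
      ((∑ t ∈ T, w t : ℕ) : ℚ) ≤ quota n v w p → (∑ t ∈ T, w t) ≤ rep w s p) :
    ∀ p : Fin m, quota n v w p ≤ (rep w s p : ℚ) ∨
      ∃ t : Fin k, s t ≠ p ∧ quota n v w p < (rep w s p : ℚ) + (w t : ℚ) := by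
  intro p
  have hvpn : v p ≤ n := hn ▸ Finset.single_le_sum (fun i _ => Nat.zero_le _) (mem_univ p)
  have hn0 : 0 < n := lt_of_lt_of_le (hv p) hvpn
  by_cases hrep : quota n v w p ≤ (rep w s p : ℚ)
  · exact Or.inl hrep
  have hrep' : (rep w s p : ℚ) < quota n v w p := not_le.mp hrep
  -- the case v p = n : all seats go to p
  by_cases hvn : v p < n
  swap
  · exfalso
    have hvpn' : v p = n := le_antisymm hvpn (not_lt.mp hvn)
    have hall : ∀ t, s t = p := by
      intro t
      by_contra hne
      have hpair : v p + v (s t) ≤ n := by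
        rw [← hn]
        calc v p + v (s t) = ∑ x ∈ ({p, s t} : Finset (Fin m)), v x :=
              (Finset.sum_pair (fun h => hne h.symm)).symm
          _ ≤ ∑ x, v x :=
              Finset.sum_le_sum_of_subset (Finset.subset_univ _)
      have := hv (s t)
      omega
    apply hrep
    have hrω : rep w s p = ∑ t, w t := by
      rw [rep]
      exact Finset.sum_congr rfl (fun t _ => if_pos (hall t))
    rw [quota, hvpn', hrω, mul_div_assoc, div_self (by exact_mod_cast hn0.ne'), mul_one]
    rw [Nat.cast_sum]
  -- the case k = 0 : quota is zero
  rcases Nat.eq_zero_or_pos k with hk0 | hk0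
  · exfalso
    apply hrep
    subst hk0
    have : quota n v w p = 0 := by
      simp [quota]
    rw [this]
    exact Nat.cast_nonneg _
  -- main case
  set L := k * v p / n with hL
  have hLk : L < k := by
    rw [hL, Nat.div_lt_iff_lt_mul hn0]
    have h1 : k * v p < k * n := (Nat.mul_lt_mul_left hk0).mpr hvn
    exact h1
  classical
  set P : ℕ → Prop := fun j => (pref w j : ℚ) ≤ quota n v w p with hP
  set r := Nat.findGreatest P L with hr
  have hP0 : P 0 := by
    have h0 : pref w 0 = 0 := by simp [pref]
    rw [hP]
    simp only [h0, Nat.cast_zero]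
    exact le_of_lt (lt_of_le_of_lt (Nat.cast_nonneg _) hrep')
  have hrL : r ≤ L := Nat.findGreatest_le L
  have hrk : r < k := lt_of_le_of_lt hrL hLk
  have hPr : P r := Nat.findGreatest_spec (Nat.zero_le L) hP0
  have hT : pref w r ≤ rep w s p := by
    apply hWLQo p (Finset.univ.filter (fun i : Fin k => (i : ℕ) < r))
    · rw [card_lt_filter k r (le_of_lt hrk)]
      exact hrL
    · exact hPr
  -- the total weight
  set ω := ∑ t, w t with hω
  have hω0 : 0 < ω := lt_of_lt_of_le (hw ⟨0, hk0⟩)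
    (Finset.single_le_sum (fun i _ => Nat.zero_le _) (mem_univ (⟨0, hk0⟩ : Fin k)))
  have hq1 : quota n v w p < (pref w (r + 1) : ℚ) := by
    rcases lt_or_eq_of_le hrL with hlt | heq
    · have := Nat.findGreatest_is_greatest (Nat.lt_succ_self r) hlt
      rw [hP] at this
      exact lt_of_not_ge this
    · rw [heq]
      set c := w ⟨L, hLk⟩ with hc
      have hcard : (Finset.univ.filter (fun i : Fin k => (i : ℕ) < L + 1)).card
          = L + 1 := card_lt_filter k (L + 1) hLk
      have hA1 : (L + 1) * c ≤ pref w (L + 1) := by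
        calc (L + 1) * c = ∑ _i ∈ Finset.univ.filter
              (fun i : Fin k => (i : ℕ) < L + 1), c := by rw [Finset.sum_const, hcard, smul_eq_mul]
          _ ≤ pref w (L + 1) := by
              apply Finset.sum_le_sum
              intro i hi
              apply hmono i ⟨L, hLk⟩
              simp only [Finset.mem_filter] at hi
              simp only [Fin.le_def]
              omega
      have hcard2 : (Finset.univ.filter (fun i : Fin k => ¬ (i : ℕ) < L + 1)).card
          = k - (L + 1) := by
        have := Finset.card_filter_add_card_filter_not
          (s := (Finset.univ : Finset (Fin k))) (p := fun i => (i : ℕ) < L + 1)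
        rw [hcard, Finset.card_univ, Fintype.card_fin] at this
        omega
      have hA2 : ∑ i ∈ Finset.univ.filter (fun i : Fin k => ¬ (i : ℕ) < L + 1), w i
          ≤ (k - (L + 1)) * c := by
        calc ∑ i ∈ Finset.univ.filter (fun i : Fin k => ¬ (i : ℕ) < L + 1), w i
            ≤ ∑ _i ∈ Finset.univ.filter (fun i : Fin k => ¬ (i : ℕ) < L + 1), c := by
              apply Finset.sum_le_sum
              intro i hi
              apply hmono ⟨L, hLk⟩ i
              simp only [Finset.mem_filter] at hi
              simp only [Fin.le_def]
              omega
          _ = (k - (L + 1)) * c := by rw [Finset.sum_const, hcard2, smul_eq_mul]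
      have hA3 : ω = pref w (L + 1) +
          ∑ i ∈ Finset.univ.filter (fun i : Fin k => ¬ (i : ℕ) < L + 1), w i := by
        rw [hω, pref]
        exact (Finset.sum_filter_add_sum_filter_not _ _ _).symm
      have hKS : (L + 1) * ω ≤ k * pref w (L + 1) := by
        set a := pref w (L + 1)
        set b := ∑ i ∈ Finset.univ.filter (fun i : Fin k => ¬ (i : ℕ) < L + 1), w i
        set d := k - (L + 1) with hd
        have hkd : k = L + 1 + d := by omega
        have h1 : (L + 1) * b ≤ (L + 1) * (d * c) := Nat.mul_le_mul_left _ hA2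
        have h2 : d * ((L + 1) * c) ≤ d * a := Nat.mul_le_mul_left _ hA1
        calc (L + 1) * ω = (L + 1) * a + (L + 1) * b := by rw [hA3, Nat.mul_add]
          _ ≤ (L + 1) * a + d * a := by
              have : (L + 1) * (d * c) = d * ((L + 1) * c) := by ring
              omega
          _ = k * a := by rw [hkd]; ring
      have hkv : k * v p < n * (L + 1) := by
        have h := (Nat.div_lt_iff_lt_mul hn0).mp (Nat.lt_succ_self L)
        calc k * v p < (L + 1) * n := h
          _ = n * (L + 1) := Nat.mul_comm _ _
      have hmain : ω * v p < pref w (L + 1) * n := by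
        have h1 : k * (ω * v p) < k * (pref w (L + 1) * n) := by
          calc k * (ω * v p) = ω * (k * v p) := by ring
            _ < ω * (n * (L + 1)) := by
                nlinarith
            _ = n * ((L + 1) * ω) := by ring
            _ ≤ n * (k * pref w (L + 1)) := Nat.mul_le_mul_left _ hKS
            _ = k * (pref w (L + 1) * n) := by ring
        exact Nat.lt_of_mul_lt_mul_left h1
      rw [quota, div_lt_iff₀ (by exact_mod_cast hn0)]
      rw [← Nat.cast_sum, ← hω]
      exact_mod_cast hmain
  by_cases hex : ∃ u : Fin k, (u : ℕ) ≤ r ∧ s u ≠ p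
  · obtain ⟨u, hur, hup⟩ := hex
    refine Or.inr ⟨u, hup, ?_⟩
    have hwu : w ⟨r, hrk⟩ ≤ w u := hmono u ⟨r, hrk⟩ (by simpa [Fin.le_def] using hur)
    have hsucc : pref w (r + 1) = pref w r + w ⟨r, hrk⟩ := pref_succ w r hrk
    have hfin : pref w (r + 1) ≤ rep w s p + w u := by
      rw [hsucc]; omega
    calc quota n v w p < (pref w (r + 1) : ℚ) := hq1
      _ ≤ (rep w s p : ℚ) + (w u : ℚ) := by exact_mod_cast hfin
  · push_neg at hex
    exfalso
    have hle : pref w (r + 1) ≤ rep w s p := by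
      have hrepf : rep w s p = ∑ i ∈ Finset.univ.filter
          (fun i : Fin k => s i = p), w i := (Finset.sum_filter _ _).symm
      rw [hrepf, pref]
      apply Finset.sum_le_sum_of_subset
      intro i hi
      simp only [Finset.mem_filter, Finset.mem_univ, true_and] at hi ⊢
      exact hex i (by omega)
    have : (pref w (r + 1) : ℚ) ≤ (rep w s p : ℚ) := by exact_mod_cast hle
    linarith
end

section
/- For every election instance with exactly two parties there exists a seat assignment satisfying WLQ-X: for each party p, either rep(p,s) ≥ q(p), or for every seat t not assigned to p it holds that rep(p,s) + w_t > q(p). Moreover, the assignment that gives party 1 a maximal final segment of the (non-increasing) weight vector whose total weight does not exceed q(1), and gives all remaining seats to party 2, witnesses this. -/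
open Finset

/-- WLQ-X: each party reaches its quota or any extra seat would take it past the quota. -/
def WLQX {m k : ℕ} (n : ℕ) (v : Fin m → ℕ) (w : Fin k → ℕ) (s : Fin k → Fin m) : Prop :=
  ∀ p : Fin m, quota n v w p ≤ (rep w s p : ℚ) ∨
    ∀ t : Fin k, s t ≠ p → quota n v w p < (rep w s p : ℚ) + (w t : ℚ)

/-- Tail sum of weights from index `c` on. -/
def Fsum {k : ℕ} (w : Fin k → ℕ) (c : ℕ) : ℕ :=
  ∑ i ∈ Finset.univ.filter (fun i : Fin k => c ≤ (i : ℕ)), w i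

/-- For two parties a WLQ-X assignment always exists; witnessed by giving party 1
a maximal final segment of the non-increasing weight vector of total weight at most q(1). -/
theorem stmt3 (n k : ℕ) (v : Fin 2 → ℕ) (w : Fin k → ℕ)
    (hv : ∀ p, 1 ≤ v p) (hn : ∑ p, v p = n)
    (hw : ∀ t, 1 ≤ w t) (hmono : ∀ i j : Fin k, i ≤ j → w j ≤ w i) :
    ∃ s : Fin k → Fin 2, WLQX n v w s ∧ ∃ c : ℕ,
      (∀ i : Fin k, s i = 0 ↔ c ≤ (i : ℕ)) ∧
      ((∑ i ∈ Finset.univ.filter (fun i : Fin k => c ≤ (i : ℕ)), w i : ℕ) : ℚ)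
        ≤ quota n v w 0 ∧
      (∀ c' : ℕ, c' < c →
        quota n v w 0 <
          ((∑ i ∈ Finset.univ.filter (fun i : Fin k => c' ≤ (i : ℕ)), w i : ℕ) : ℚ)) := by
  have hn2 : 2 ≤ n := by
    have h0 := hv 0; have h1 := hv 1
    simp [Fin.sum_univ_two] at hn; omega
  have hnQ : (0:ℚ) < (n:ℚ) := by exact_mod_cast Nat.lt_of_lt_of_le (by norm_num) hn2
  have hq0 : 0 ≤ quota n v w 0 := by
    unfold quota; positivity
  have hFk : Fsum w k = 0 := by
    unfold Fsum
    rw [Finset.filter_eq_empty_iff.mpr (fun i _ => by have := i.isLt; omega)]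
    simp
  have hex : ∃ c, (Fsum w c : ℚ) ≤ quota n v w 0 := ⟨k, by rw [hFk]; exact_mod_cast hq0⟩
  set c := Nat.find hex with hcdef
  have hc : (Fsum w c : ℚ) ≤ quota n v w 0 := Nat.find_spec hex
  have hmin : ∀ c' < c, quota n v w 0 < (Fsum w c' : ℚ) := fun c' h =>
    lt_of_not_ge (Nat.find_min hex h)
  have hck : c ≤ k := Nat.find_le (by rw [hFk]; exact_mod_cast hq0)
  refine ⟨fun i => if c ≤ (i : ℕ) then 0 else 1, ?_, c, ?_, hc, hmin⟩
  · set s : Fin k → Fin 2 := fun i => if c ≤ (i : ℕ) then 0 else 1 with hs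
    have hrep0 : rep w s 0 = Fsum w c := by
      unfold rep Fsum
      rw [Finset.sum_filter]
      refine Finset.sum_congr rfl fun t _ => ?_
      by_cases h : c ≤ (t : ℕ) <;> simp [hs, h]
    have hsum : rep w s 0 + rep w s 1 = ∑ t, w t := by
      unfold rep
      rw [← Finset.sum_add_distrib]
      refine Finset.sum_congr rfl fun t _ => ?_
      by_cases h : c ≤ (t : ℕ) <;> simp [hs, h]
    have hqsum : quota n v w 0 + quota n v w 1 = ∑ t, (w t : ℚ) := by
      unfold quota
      have hnn : (v 0 : ℚ) + (v 1 : ℚ) = (n : ℚ) := by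
        exact_mod_cast congrArg (Nat.cast : ℕ → ℚ) (by simpa [Fin.sum_univ_two] using hn)
      rw [← add_div, ← mul_add, hnn, mul_div_assoc, div_self (ne_of_gt hnQ), mul_one]
    have hsumQ : (rep w s 0 : ℚ) + (rep w s 1 : ℚ) = ∑ t, (w t : ℚ) := by
      exact_mod_cast congrArg (Nat.cast : ℕ → ℚ) hsum
    have hr0Q : (rep w s 0 : ℚ) = (Fsum w c : ℚ) := congrArg (Nat.cast : ℕ → ℚ) hrep0
    intro p
    by_cases hp : p = 0
    case neg =>
      have hp1 : p = 1 := by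
        fin_cases p
        · exact absurd rfl hp
        · rfl
      subst hp1
      left
      linarith [hc, hsumQ, hqsum, hr0Q]
    subst hp
    · right
      intro t ht
      have htc : (t : ℕ) < c := by
        by_contra h
        exact ht (by simp [hs, Nat.le_of_not_lt h])
      have hc1k : c - 1 < k := by have := t.isLt; omega
      have hsplit : Fsum w (c - 1) = w ⟨c - 1, hc1k⟩ + Fsum w c := by
        unfold Fsum
        have hins : Finset.univ.filter (fun i : Fin k => c - 1 ≤ (i : ℕ)) =
            insert ⟨c - 1, hc1k⟩ (Finset.univ.filter (fun i : Fin k => c ≤ (i : ℕ))) := by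
          ext i
          simp [Finset.mem_insert, Fin.ext_iff]
          omega
        rw [hins, Finset.sum_insert (by simp; omega)]
      have hlt : quota n v w 0 < (Fsum w (c - 1) : ℚ) := hmin (c - 1) (by omega)
      have hwt : w ⟨c - 1, hc1k⟩ ≤ w t := hmono t ⟨c - 1, hc1k⟩ (by simp [Fin.le_def]; omega)
      have : (Fsum w (c-1) : ℚ) ≤ (Fsum w c : ℚ) + (w t : ℚ) := by
        rw [hsplit]; push_cast
        have : (w ⟨c - 1, hc1k⟩ : ℚ) ≤ (w t : ℚ) := by exact_mod_cast hwt
        linarith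
      rw [hr0Q]
      linarith
  · intro i
    by_cases h : c ≤ (i : ℕ) <;> simp [h]
end

section
/- The Greedy method satisfies WLQ-X-r: for every election instance, for every party p in the returned assignment s, either rep(p,s) ≥ q(p), or for every seat t that was assigned to some party p* ≠ p with rep(p*,s) > q(p*), it holds that rep(p,s) + w_t > q(p). -/
open Finset

/-- A run of the Greedy method: each seat goes to a party maximising q(p) − g_p(t). -/
def GreedyRun {m k : ℕ} (n : ℕ) (v : Fin m → ℕ) (w : Fin k → ℕ) (s : Fin k → Fin m) : Prop :=
  ∀ t : Fin k, ∀ p : Fin m,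
    quota n v w p - (gw w s t p : ℚ) ≤ quota n v w (s t) - (gw w s t (s t) : ℚ)

/-- The Greedy method satisfies WLQ-X-r. -/
theorem stmt4 (n k m : ℕ) (v : Fin m → ℕ) (w : Fin k → ℕ)
    (hv : ∀ p, 1 ≤ v p) (hn : ∑ p, v p = n)
    (hw : ∀ t, 1 ≤ w t) (hmono : ∀ i j : Fin k, i ≤ j → w j ≤ w i)
    (s : Fin k → Fin m) (hs : GreedyRun n v w s) :
    ∀ p : Fin m, quota n v w p ≤ (rep w s p : ℚ) ∨
      ∀ t : Fin k, (s t ≠ p ∧ quota n v w (s t) < (rep w s (s t) : ℚ)) →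
        quota n v w p < (rep w s p : ℚ) + (w t : ℚ) := by
  intro p
  by_cases hq : quota n v w p ≤ (rep w s p : ℚ)
  · exact Or.inl hq
  · right
    rintro t ⟨hne, hlt⟩
    set pstar := s t with hpstar
    set F := Finset.univ.filter (fun t'' : Fin k => s t'' = pstar) with hF
    have hFne : F.Nonempty := ⟨t, by simp [hF, hpstar]⟩
    set t' := F.max' hFne with ht'
    have ht'mem : t' ∈ F := F.max'_mem hFne
    have hst' : s t' = pstar := by simpa [hF] using ht'mem
    have htle : t ≤ t' := F.le_max' t (by simp [hF, hpstar])
    -- rep pstar = gw t' pstar + w t'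
    have hrep : rep w s pstar = gw w s t' pstar + w t' := by
      have hsplit := Finset.sum_filter_add_sum_filter_not Finset.univ
        (fun t'' : Fin k => t'' < t') (fun t'' => if s t'' = pstar then w t'' else 0)
      have h2 : ∑ t'' ∈ Finset.univ.filter (fun t'' : Fin k => ¬ t'' < t'),
          (if s t'' = pstar then w t'' else 0) = w t' := by
        rw [show w t' = if s t' = pstar then w t' else 0 by simp [hst']]
        apply Finset.sum_eq_single_of_mem t'
        · simp
        · intro b hb hbne
          have hb' : ¬ b < t' := (Finset.mem_filter.1 hb).2
          have : s b ≠ pstar := by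
            intro hsb
            exact hb' (lt_of_le_of_ne (F.le_max' b (by simp [hF, hsb])) hbne)
          simp [this]
      rw [rep, ← hsplit, h2, gw]
    have hgw_le : gw w s t' p ≤ rep w s p := by
      exact Finset.sum_le_sum_of_subset (Finset.filter_subset _ _)
    have hgreedy := hs t' p
    rw [hst'] at hgreedy
    have hwle : w t' ≤ w t := hmono t t' htle
    have hcast1 : ((gw w s t' p : ℕ) : ℚ) ≤ (rep w s p : ℚ) := by exact_mod_cast hgw_le
    have hcast2 : ((rep w s pstar : ℕ) : ℚ) = (gw w s t' pstar : ℚ) + (w t' : ℚ) := by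
      exact_mod_cast hrep
    have hcast3 : ((w t' : ℕ) : ℚ) ≤ (w t : ℚ) := by exact_mod_cast hwle
    rw [hcast2] at hlt
    linarith
end

section
/- The weighted D'Hondt method satisfies WLQ-X-r: in any returned seat assignment s, every party p either has rep(p,s) ≥ q(p), or for every seat t assigned to some party p* ≠ p whose final representation exceeds q(p*), it holds that rep(p,s) + w_t > q(p). -/
open Finset

/-- A run of weighted D'Hondt: seat t goes to a party maximising v_p / (g_p(t) + w_t). -/
def DHondtRun {m k : ℕ} (v : Fin m → ℕ) (w : Fin k → ℕ) (s : Fin k → Fin m) : Prop :=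
  ∀ t : Fin k, ∀ p : Fin m,
    (v p : ℚ) / ((gw w s t p : ℚ) + (w t : ℚ)) ≤
      (v (s t) : ℚ) / ((gw w s t (s t) : ℚ) + (w t : ℚ))

/-- The weighted D'Hondt method satisfies WLQ-X-r. -/
theorem stmt5 (n k m : ℕ) (v : Fin m → ℕ) (w : Fin k → ℕ)
    (hv : ∀ p, 1 ≤ v p) (hn : ∑ p, v p = n)
    (hw : ∀ t, 1 ≤ w t) (hmono : ∀ i j : Fin k, i ≤ j → w j ≤ w i)
    (s : Fin k → Fin m) (hs : DHondtRun v w s) :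
    ∀ p : Fin m, quota n v w p ≤ (rep w s p : ℚ) ∨
      ∀ t : Fin k, (s t ≠ p ∧ quota n v w (s t) < (rep w s (s t) : ℚ)) →
        quota n v w p < (rep w s p : ℚ) + (w t : ℚ) := by
  intro p
  right
  rintro t ⟨hne, hq⟩
  set P := s t with hP
  set T := Finset.univ.filter (fun t' => s t' = P) with hT
  have hTne : t ∈ T := by simp [hT, hP]
  have hTnonempty : T.Nonempty := ⟨t, hTne⟩
  set u := T.max' hTnonempty with hu
  have huT : u ∈ T := T.max'_mem hTnonempty
  have hsu : s u = P := (Finset.mem_filter.mp huT).2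
  have htu : t ≤ u := T.le_max' t hTne
  have hwu : w u ≤ w t := hmono t u htu
  -- rep P = gw u P + w u
  have hrepP : rep w s P = gw w s u P + w u := by
    have hsplit := (Finset.sum_filter_add_sum_filter_not Finset.univ (fun t' => t' < u)
      (fun t' => if s t' = P then w t' else 0)).symm
    rw [rep, hsplit, gw]
    congr 1
    rw [Finset.sum_eq_single_of_mem u]
    · rw [if_pos hsu]
    · simp
    · intro b hb hbne
      rw [if_neg]
      intro hsb
      have hbT : b ∈ T := by simp [hT, hsb]
      have hble : b ≤ u := T.le_max' b hbT
      have hblt : b < u := lt_of_le_of_ne hble hbne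
      have : ¬ b < u := (Finset.mem_filter.mp hb).2
      exact this hblt
  have hgle : gw w s u p ≤ rep w s p := by
    apply Finset.sum_le_sum_of_subset_of_nonneg (Finset.filter_subset _ _)
    intro i _ _; exact Nat.zero_le _
  have hn' : (0:ℚ) < (n:ℚ) := by
    have : 0 < n := by
      rw [← hn]
      calc 0 < v p := hv p
        _ ≤ ∑ q, v q := Finset.single_le_sum (fun i _ => Nat.zero_le _) (Finset.mem_univ p)
    exact_mod_cast this
  have hWq : (0:ℚ) ≤ ∑ t', (w t' : ℚ) :=
    Finset.sum_nonneg (fun i _ => Nat.cast_nonneg _)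
  have hwu1 : (1:ℚ) ≤ (w u : ℚ) := by exact_mod_cast hw u
  have hA : (0:ℚ) < (gw w s u p : ℚ) + (w u : ℚ) := by
    have := Nat.cast_nonneg (α := ℚ) (gw w s u p); linarith
  have hB : (0:ℚ) < (gw w s u P : ℚ) + (w u : ℚ) := by
    have := Nat.cast_nonneg (α := ℚ) (gw w s u P); linarith
  have hd := hs u p
  rw [hsu] at hd
  rw [div_le_div_iff₀ hA hB] at hd
  -- hd : v p * (gw u P + w u) ≤ v P * (gw u p + w u)
  have hrepP' : (rep w s P : ℚ) = (gw w s u P : ℚ) + (w u : ℚ) := by exact_mod_cast hrepP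
  have hq' : (∑ t', (w t' : ℚ)) * (v P : ℚ) < ((gw w s u P : ℚ) + (w u : ℚ)) * n := by
    rw [quota, div_lt_iff₀ hn'] at hq
    rw [← hrepP']; exact hq
  rw [quota, div_lt_iff₀ hn']
  have hAle : (gw w s u p : ℚ) + (w u : ℚ) ≤ (rep w s p : ℚ) + (w t : ℚ) := by
    have h1 : (gw w s u p : ℚ) ≤ (rep w s p : ℚ) := by exact_mod_cast hgle
    have h2 : (w u : ℚ) ≤ (w t : ℚ) := by exact_mod_cast hwu
    linarith
  nlinarith [mul_le_mul_of_nonneg_left hd hWq, mul_lt_mul_of_pos_right hq' hA,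
    mul_le_mul_of_nonneg_left hAle (le_of_lt (mul_pos hB hn'))]
end

section
/- The weighted Adams method can fail WLQ-1: with four parties with votes (9, 1, 1, 1) and four unit-weight seats, Adams_ω assigns exactly one seat to each party, so party 1 receives representation 1 while q(1) = 3, and adding any single remaining seat (weight 1) does not bring party 1 above its quota. -/
open Finset

/-- A run of weighted Adams: seat t goes to a party maximising v_p / g_p(t),
where the ratio is ∞ whenever g_p(t) = 0. -/
def AdamsRun {m k : ℕ} (v : Fin m → ℕ) (w : Fin k → ℕ) (s : Fin k → Fin m) : Prop :=
  ∀ t : Fin k, ∀ p : Fin m,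
    gw w s t (s t) = 0 ∨
      (gw w s t p ≠ 0 ∧
        (v p : ℚ) / (gw w s t p : ℚ) ≤ (v (s t) : ℚ) / (gw w s t (s t) : ℚ))

/-- Weighted Adams fails WLQ-1: with votes (9,1,1,1) and four unit seats it gives
every party exactly one seat, and party 1 (quota 3) cannot reach its quota with
one extra seat. -/
theorem stmt7 :
    ∀ s : Fin 4 → Fin 4, AdamsRun ![9,1,1,1] ![1,1,1,1] s →
      (∀ p, rep ![1,1,1,1] s p = 1) ∧
      ¬ (∀ p : Fin 4, quota 12 ![9,1,1,1] ![1,1,1,1] p ≤ (rep ![1,1,1,1] s p : ℚ) ∨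
          ∃ t : Fin 4, s t ≠ p ∧
            quota 12 ![9,1,1,1] ![1,1,1,1] p <
              (rep ![1,1,1,1] s p : ℚ) + ((![1,1,1,1] : Fin 4 → ℕ) t : ℚ)) := by
  intro s h
  have hw : ∀ t : Fin 4, (![1,1,1,1] : Fin 4 → ℕ) t = 1 := by decide
  have key : ∀ t1 t2 : Fin 4, t1 < t2 → s t1 ≠ s t2 := by
    intro t1 t2 hlt heq
    -- find a fresh party at round t2
    have hcard : ((Finset.univ.filter (fun t' => t' < t2)).image s).card < (Finset.univ : Finset (Fin 4)).card := by
      have h1 : ((Finset.univ.filter (fun t' => t' < t2)).image s).card ≤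
          (Finset.univ.filter (fun t' => t' < t2)).card := Finset.card_image_le
      have h2 : (Finset.univ.filter (fun t' => t' < t2)) ⊆ (Finset.univ.erase t2) := by
        intro x hx
        simp only [Finset.mem_filter, Finset.mem_univ, true_and] at hx
        exact Finset.mem_erase.mpr ⟨ne_of_lt hx, Finset.mem_univ x⟩
      have h3 := Finset.card_le_card h2
      have h4 : (Finset.univ.erase t2).card = 3 := by
        rw [Finset.card_erase_of_mem (Finset.mem_univ t2)]
        simp
      simp only [Finset.card_univ, Fintype.card_fin]
      omega
    have hpos : 0 < (((Finset.univ.filter (fun t' => t' < t2)).image s)ᶜ).card := by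
      rw [Finset.card_compl]
      simp only [Finset.card_univ, Fintype.card_fin] at hcard ⊢
      omega
    obtain ⟨p, hpmem⟩ := Finset.card_pos.mp hpos
    have hp := Finset.mem_compl.mp hpmem
    have hgwp : gw ![1,1,1,1] s t2 p = 0 := by
      apply Finset.sum_eq_zero
      intro t' ht'
      have : s t' ≠ p := by
        intro hstp
        exact hp (Finset.mem_image.mpr ⟨t', ht', hstp⟩)
      simp [this]
    rcases h t2 p with h0 | ⟨hne, -⟩
    · have hle : (1 : ℕ) ≤ gw ![1,1,1,1] s t2 (s t2) := by
        have ht1 : t1 ∈ Finset.univ.filter (fun t' => t' < t2) := by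
          simp [hlt]
        have := Finset.single_le_sum
          (f := fun t' => if s t' = s t2 then (![1,1,1,1] : Fin 4 → ℕ) t' else 0)
          (fun i _ => Nat.zero_le _) ht1
        simpa [gw, heq, hw] using this
      omega
    · exact hne hgwp
  have hinj : Function.Injective s := by
    intro t1 t2 heq
    rcases lt_trichotomy t1 t2 with hlt | heqq | hlt
    · exact absurd heq (key t1 t2 hlt)
    · exact heqq
    · exact absurd heq.symm (key t2 t1 hlt)
  have hbij : Function.Bijective s := Finite.injective_iff_bijective.mp hinj
  have hrep : ∀ p, rep ![1,1,1,1] s p = 1 := by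
    intro p
    unfold rep
    have := Equiv.sum_comp (Equiv.ofBijective s hbij)
      (fun q => if q = p then (1 : ℕ) else 0)
    simp only [Equiv.ofBijective_apply] at this
    simp only [hw]
    rw [this]
    simp
  refine ⟨hrep, ?_⟩
  intro hcon
  have hq : quota 12 ![9,1,1,1] ![1,1,1,1] 0 = 3 := by
    simp [quota, Fin.sum_univ_four]
    norm_num
  rcases hcon 0 with hle | ⟨t, -, hlt⟩
  · rw [hq, hrep 0] at hle
    norm_num at hle
  · rw [hq, hrep 0, hw t] at hlt
    norm_num at hlt
end

section
/- Weighted envy-freeness up to any seat (WEFX) implies weighted upper quota up to any seat (WUQ-X): if a complete seat assignment s satisfies, for all parties p_x, p_y and every seat t assigned to p_y, rep(p_x,s)/v_{p_x} ≥ (rep(p_y,s) − w_t)/v_{p_y}, then for every party p, either rep(p,s) ≤ q(p), or for every seat t assigned to p, rep(p,s) − w_t < q(p). -/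
open Finset

lemma sum_rep {m k : ℕ} (w : Fin k → ℕ) (s : Fin k → Fin m) :
    ∑ p, rep w s p = ∑ t, w t := by
  unfold rep
  rw [Finset.sum_comm]
  refine Finset.sum_congr rfl fun t _ => ?_
  simp

/-- WEFX implies WUQ-X. -/
theorem stmt8 (n k m : ℕ) (v : Fin m → ℕ) (w : Fin k → ℕ)
    (hm : 2 ≤ m) (hv : ∀ p, 1 ≤ v p) (hn : ∑ p, v p = n) (hw : ∀ t, 1 ≤ w t)
    (s : Fin k → Fin m)
    (hWEFX : ∀ px py : Fin m, ∀ t : Fin k, s t = py →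
      ((rep w s py : ℚ) - (w t : ℚ)) / (v py : ℚ) ≤ (rep w s px : ℚ) / (v px : ℚ)) :
    ∀ p : Fin m, (rep w s p : ℚ) ≤ quota n v w p ∨
      ∀ t : Fin k, s t = p → (rep w s p : ℚ) - (w t : ℚ) < quota n v w p := by
  intro p
  by_cases hle : (rep w s p : ℚ) ≤ quota n v w p
  · exact Or.inl hle
  · right
    push_neg at hle
    intro t ht
    set ω : ℚ := ∑ t, (w t : ℚ) with hω
    have hvp : (0:ℚ) < (v p : ℚ) := by exact_mod_cast hv p
    have hvx : ∀ x : Fin m, (0:ℚ) < (v x : ℚ) := fun x => by exact_mod_cast hv x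
    have hnp : (v p : ℚ) < (n : ℚ) := by
      have : Nontrivial (Fin m) := Fin.nontrivial_iff_two_le.mpr hm
      obtain ⟨q, hq⟩ := exists_ne p
      have hsum : v p + v q ≤ n := by
        rw [← hn]
        calc v p + v q ≤ v p + ∑ x ∈ Finset.univ.erase p, v x := by
              have : v q ≤ ∑ x ∈ Finset.univ.erase p, v x :=
                Finset.single_le_sum (f := v) (fun i _ => Nat.zero_le _)
                  (Finset.mem_erase.mpr ⟨hq, Finset.mem_univ q⟩)
              omega
          _ = ∑ x, v x := Finset.add_sum_erase Finset.univ v (Finset.mem_univ p)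
      have hq1 : 1 ≤ v q := hv q
      have : v p < n := by omega
      exact_mod_cast this
    have hn0 : (0:ℚ) < (n : ℚ) := lt_trans hvp hnp
    set r : ℚ := ((rep w s p : ℚ) - (w t : ℚ)) / (v p : ℚ) with hr
    have key : ∀ x : Fin m, r * (v x : ℚ) ≤ (rep w s x : ℚ) := fun x =>
      (le_div_iff₀ (hvx x)).mp (hWEFX x p t ht)
    have hsumv : ∑ x ∈ Finset.univ.erase p, (v x : ℚ) = (n : ℚ) - (v p : ℚ) := by
      have := Finset.add_sum_erase Finset.univ (fun x => (v x : ℚ)) (Finset.mem_univ p)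
      have htot : ∑ x, (v x : ℚ) = (n : ℚ) := by exact_mod_cast congrArg (Nat.cast : ℕ → ℚ) hn
      linarith
    have hsumr : ∑ x ∈ Finset.univ.erase p, (rep w s x : ℚ) = ω - (rep w s p : ℚ) := by
      have := Finset.add_sum_erase Finset.univ (fun x => (rep w s x : ℚ)) (Finset.mem_univ p)
      have htot : ∑ x, (rep w s x : ℚ) = ω := by
        rw [hω]
        exact_mod_cast congrArg (Nat.cast : ℕ → ℚ) (sum_rep w s)
      linarith
    have hsum : r * ((n : ℚ) - (v p : ℚ)) ≤ ω - (rep w s p : ℚ) := by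
      calc r * ((n : ℚ) - (v p : ℚ)) = ∑ x ∈ Finset.univ.erase p, r * (v x : ℚ) := by
            rw [← Finset.mul_sum, hsumv]
        _ ≤ ∑ x ∈ Finset.univ.erase p, (rep w s x : ℚ) :=
            Finset.sum_le_sum fun x _ => key x
        _ = ω - (rep w s p : ℚ) := hsumr
    have hquota : quota n v w p = ω * (v p : ℚ) / (n : ℚ) := rfl
    have hlt : r * ((n : ℚ) - (v p : ℚ)) < (ω / n) * ((n : ℚ) - (v p : ℚ)) := by
      have h1 : ω - (rep w s p : ℚ) < ω - ω * (v p : ℚ) / (n : ℚ) := by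
        rw [hquota] at hle; linarith
      have h2 : ω - ω * (v p : ℚ) / (n : ℚ) = (ω / n) * ((n : ℚ) - (v p : ℚ)) := by
        field_simp
      linarith
    have hpos : (0:ℚ) < (n : ℚ) - (v p : ℚ) := by linarith
    have hrlt : r < ω / n := (mul_lt_mul_iff_of_pos_right hpos).mp hlt
    have : r * (v p : ℚ) < (ω / n) * (v p : ℚ) := (mul_lt_mul_iff_of_pos_right hvp).mpr hrlt
    rw [hr, div_mul_cancel₀ _ (ne_of_gt hvp)] at this
    rw [hquota]
    calc (rep w s p : ℚ) - (w t : ℚ) < ω / n * (v p : ℚ) := this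
      _ = ω * (v p : ℚ) / (n : ℚ) := by ring
end

section
/- The weighted Adams method satisfies WEFX: in any assignment s it returns, for all parties p_x ≠ p_y and every seat t assigned to p_y, it holds that rep(p_x,s)/v_{p_x} ≥ (rep(p_y,s) − w_t)/v_{p_y}. -/
open Finset

/-- The weighted Adams method satisfies WEFX. -/
theorem stmt9 (n k m : ℕ) (v : Fin m → ℕ) (w : Fin k → ℕ)
    (hv : ∀ p, 1 ≤ v p) (hn : ∑ p, v p = n)
    (hw : ∀ t, 1 ≤ w t) (hmono : ∀ i j : Fin k, i ≤ j → w j ≤ w i)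
    (s : Fin k → Fin m) (hs : AdamsRun v w s) :
    ∀ px py : Fin m, px ≠ py → ∀ t : Fin k, s t = py →
      ((rep w s py : ℚ) - (w t : ℚ)) / (v py : ℚ) ≤ (rep w s px : ℚ) / (v px : ℚ) := by
  intro px py hne t hst
  set S := Finset.univ.filter (fun t' => s t' = py) with hS
  have htS : t ∈ S := by simp [hS, hst]
  have hSne : S.Nonempty := ⟨t, htS⟩
  set T := S.max' hSne with hT
  have hsT : s T = py := by
    have := S.max'_mem hSne; simpa [hS] using this
  have htT : t ≤ T := S.le_max' t htS
  have hvx : (0:ℚ) < v px := by exact_mod_cast Nat.lt_of_lt_of_le Nat.zero_lt_one (hv px)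
  have hvy : (0:ℚ) < v py := by exact_mod_cast Nat.lt_of_lt_of_le Nat.zero_lt_one (hv py)
  -- decomposition of rep py
  have hdecomp : rep w s py = gw w s T py + w T := by
    rw [rep, gw]
    have h1 : ∀ t' ∈ Finset.univ, t' ∉ Finset.univ.filter (fun t' => t' ≤ T) →
        (if s t' = py then w t' else 0) = 0 := by
      intro t' _ ht'
      simp only [Finset.mem_filter, Finset.mem_univ, true_and, not_le] at ht'
      have hne' : s t' ≠ py := by
        intro h
        exact absurd (S.le_max' t' (by simp [hS, h])) (not_le.mpr ht')
      simp [hne']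
    rw [← Finset.sum_subset (Finset.filter_subset _ _) h1]
    have h2 : Finset.univ.filter (fun t' => t' ≤ T) =
        insert T (Finset.univ.filter (fun t' => t' < T)) := by
      ext x
      simp only [Finset.mem_filter, Finset.mem_univ, true_and, Finset.mem_insert]
      constructor
      · intro h; rcases eq_or_lt_of_le h with h | h
        · exact Or.inl h
        · exact Or.inr h
      · rintro (h | h)
        · exact le_of_eq h
        · exact le_of_lt h
    rw [h2, Finset.sum_insert (by simp)]
    simp [hsT, add_comm]
  have hgle : gw w s T px ≤ rep w s px :=
    Finset.sum_le_sum_of_subset (Finset.filter_subset _ _)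
  have key : (rep w s py : ℚ) - (w t : ℚ) ≤ (gw w s T py : ℚ) := by
    have hwT : w T ≤ w t := hmono t T htT
    have h1 : (rep w s py : ℚ) = (gw w s T py : ℚ) + (w T : ℚ) := by
      exact_mod_cast hdecomp
    have h2 : (w T : ℚ) ≤ (w t : ℚ) := by exact_mod_cast hwT
    linarith
  by_cases hgy : gw w s T py = 0
  · have h1 : (rep w s py : ℚ) - (w t : ℚ) ≤ 0 := by
      rw [hgy] at key; simpa using key
    have h2 : ((rep w s py : ℚ) - (w t : ℚ)) / (v py : ℚ) ≤ 0 :=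
      div_nonpos_of_nonpos_of_nonneg h1 (le_of_lt hvy)
    have h3 : (0:ℚ) ≤ (rep w s px : ℚ) / (v px : ℚ) :=
      div_nonneg (by positivity) (le_of_lt hvx)
    linarith
  · rcases hs T px with h0 | ⟨hgx, hle⟩
    · rw [hsT] at h0; exact absurd h0 hgy
    · rw [hsT] at hle
      have hgx' : (0:ℚ) < (gw w s T px : ℚ) := by
        exact_mod_cast Nat.pos_of_ne_zero hgx
      have hgy' : (0:ℚ) < (gw w s T py : ℚ) := by
        exact_mod_cast Nat.pos_of_ne_zero hgy
      rw [div_le_div_iff₀ hgx' hgy'] at hle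
      rw [div_le_div_iff₀ hvy hvx]
      have hgxr : (gw w s T px : ℚ) ≤ (rep w s px : ℚ) := by exact_mod_cast hgle
      nlinarith [key, hle, hgxr, hvx.le, hvy.le]
end

section
/- WEF1 and WLQ-1 are incompatible: there is an election instance for which no seat assignment satisfies both weighted envy-freeness up to one seat (WEF1) and weighted lower quota up to one seat (WLQ-1). -/
open Finset

/-- WEF1. -/
def WEF1 {m k : ℕ} (v : Fin m → ℕ) (w : Fin k → ℕ) (s : Fin k → Fin m) : Prop :=
  ∀ px py : Fin m, (∃ t, s t = py) →
    ∃ t : Fin k, s t = py ∧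
      ((rep w s py : ℚ) - (w t : ℚ)) / (v py : ℚ) ≤ (rep w s px : ℚ) / (v px : ℚ)

/-- WLQ-1. -/
def WLQ1 {m k : ℕ} (n : ℕ) (v : Fin m → ℕ) (w : Fin k → ℕ) (s : Fin k → Fin m) : Prop :=
  ∀ p : Fin m, quota n v w p ≤ (rep w s p : ℚ) ∨
    ∃ t : Fin k, s t ≠ p ∧ quota n v w p < (rep w s p : ℚ) + (w t : ℚ)

theorem key : ∀ s : Fin 3 → Fin 3,
    ¬ (WEF1 ![1,1,4] ![1,1,1] s ∧ WLQ1 6 ![1,1,4] ![1,1,1] s) := by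
  intro s ⟨h1, h2⟩
  have hfin : ∀ i : Fin 3, i = 0 ∨ i = 1 ∨ i = 2 := by decide
  -- total weight is 3
  have htot : rep ![1,1,1] s 0 + rep ![1,1,1] s 1 + rep ![1,1,1] s 2 = 3 := by
    simp only [rep, Fin.sum_univ_three]
    rcases hfin (s 0) with h|h|h <;> rcases hfin (s 1) with h'|h'|h' <;>
      rcases hfin (s 2) with h''|h''|h'' <;> simp [h, h', h'']
  -- quota of party 2 is 2
  have hq2 : quota 6 ![1,1,4] ![1,1,1] (2 : Fin 3) = 2 := by
    simp [quota, Fin.sum_univ_three]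
    norm_num
  -- weights are all 1
  have hw : ∀ t : Fin 3, (![1,1,1] : Fin 3 → ℕ) t = 1 := by decide
  -- WLQ1 forces rep of party 2 ≥ 2
  have hrep2 : 2 ≤ rep ![1,1,1] s 2 := by
    rcases h2 2 with h | ⟨t, _, ht⟩
    · rw [hq2] at h; exact_mod_cast h
    · rw [hq2, hw t] at ht
      push_cast at ht
      have : (1 : ℚ) < (rep ![1,1,1] s 2 : ℚ) := by linarith
      exact_mod_cast this
  -- party 2 holds a seat
  have hseat : ∃ t, s t = 2 := by
    by_contra hc
    push_neg at hc
    have : rep ![1,1,1] s 2 = 0 := by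
      simp only [rep, Fin.sum_univ_three]
      simp [hc 0, hc 1, hc 2]
    omega
  -- some small party has rep 0
  have hsmall : rep ![1,1,1] s 0 = 0 ∨ rep ![1,1,1] s 1 = 0 := by omega
  have hcontra : ∀ px : Fin 3, rep ![1,1,1] s px = 0 → (![1,1,4] : Fin 3 → ℕ) px = 1 → False := by
    intro px hpx hv
    obtain ⟨t, hts, ht⟩ := h1 px 2 hseat
    rw [hw t, hpx, hv] at ht
    have h2' : (2 : ℚ) ≤ (rep ![1,1,1] s 2 : ℚ) := by exact_mod_cast hrep2
    rw [show (![1,1,4] : Fin 3 → ℕ) 2 = 4 from rfl] at ht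
    push_cast at ht
    linarith
  rcases hsmall with h | h
  · exact hcontra 0 h rfl
  · exact hcontra 1 h rfl

/-- WEF1 and WLQ-1 are incompatible: some election instance admits no seat
assignment satisfying both. -/
theorem stmt10 :
    ∃ (m k n : ℕ) (v : Fin m → ℕ) (w : Fin k → ℕ),
      (∀ p, 1 ≤ v p) ∧ (∑ p, v p = n) ∧ (∀ t, 1 ≤ w t) ∧
      (∀ i j : Fin k, i ≤ j → w j ≤ w i) ∧
      ∀ s : Fin k → Fin m, ¬ (WEF1 v w s ∧ WLQ1 n v w s) := by
  exact ⟨3, 3, 6, ![1,1,4], ![1,1,1], by decide, by decide, by decide, by decide, key⟩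
end

section
/- The Greedy method satisfies WUQ-X: in any assignment s it produces, for every party p, either rep(p,s) ≤ q(p), or for every seat t assigned to p, rep(p,s) − w_t < q(p). -/
open Finset

/-- The Greedy method satisfies WUQ-X. -/
theorem stmt11 (n k m : ℕ) (v : Fin m → ℕ) (w : Fin k → ℕ)
    (hv : ∀ p, 1 ≤ v p) (hn : ∑ p, v p = n)
    (hw : ∀ t, 1 ≤ w t) (hmono : ∀ i j : Fin k, i ≤ j → w j ≤ w i)
    (s : Fin k → Fin m) (hs : GreedyRun n v w s) :
    ∀ p : Fin m, (rep w s p : ℚ) ≤ quota n v w p ∨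
      ∀ t : Fin k, s t = p → (rep w s p : ℚ) - (w t : ℚ) < quota n v w p := by
  intro p
  right
  intro t hst
  have hm : 0 < m := p.pos
  have hn0 : 0 < n := by
    subst hn
    exact Finset.sum_pos (fun q _ => hv q) ⟨p, mem_univ p⟩
  set S := univ.filter fun t' => s t' = p with hS
  have htS : t ∈ S := by simp [hS, hst]
  have hSne : S.Nonempty := ⟨t, htS⟩
  set T := S.max' hSne with hT
  have hTS : T ∈ S := S.max'_mem hSne
  have hsT : s T = p := by simpa [hS] using hTS
  have htT : t ≤ T := S.le_max' t htS
  -- rep = gw T p + w T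
  have hins : (univ.filter fun t' : Fin k => t' ≤ T) =
      insert T (univ.filter fun t' => t' < T) := by
    ext x
    simp [le_iff_lt_or_eq, or_comm]
  have hrep : rep w s p = gw w s T p + w T := by
    have hzero : ∀ x ∈ (univ : Finset (Fin k)),
        x ∉ univ.filter (fun t' : Fin k => t' ≤ T) → (if s x = p then w x else 0) = 0 := by
      intro x _ hx
      simp only [mem_filter, mem_univ, true_and, not_le] at hx
      have hne : s x ≠ p := by
        intro h
        exact absurd (S.le_max' x (by simp [hS, h])) (not_le.mpr hx)
      simp [hne]
    have h1 : rep w s p = ∑ x ∈ univ.filter (fun t' : Fin k => t' ≤ T),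
        (if s x = p then w x else 0) :=
      (Finset.sum_subset (filter_subset _ _) hzero).symm
    rw [h1, hins, Finset.sum_insert (by simp)]
    simp [gw, hsT, Nat.add_comm]
  -- sum of quotas
  have hq : ∑ p', quota n v w p' = ∑ t', (w t' : ℚ) := by
    simp only [quota]
    rw [← Finset.sum_div, ← Finset.mul_sum]
    have hv' : ∑ p', (v p' : ℚ) = (n : ℚ) := by
      rw [← Nat.cast_sum, hn]
    rw [hv']
    field_simp
  -- sum of gw
  have hg : ∑ p', (gw w s T p' : ℚ) = ∑ t' ∈ univ.filter (fun t' => t' < T), (w t' : ℚ) := by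
    simp only [gw]
    push_cast
    rw [Finset.sum_comm]
    refine Finset.sum_congr rfl fun t' _ => ?_
    rw [Finset.sum_ite_eq]
    simp
  -- remaining weight bound
  have hrem : (∑ t' ∈ univ.filter (fun t' => t' < T), (w t' : ℚ)) + (w T : ℚ)
      ≤ ∑ t', (w t' : ℚ) := by
    have : ∑ t' ∈ insert T (univ.filter fun t' => t' < T), (w t' : ℚ)
        ≤ ∑ t', (w t' : ℚ) := by
      apply Finset.sum_le_sum_of_subset_of_nonneg
      · intro x _; exact mem_univ x
      · intro x _ _; positivity
    rw [Finset.sum_insert (by simp)] at this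
    linarith
  -- greedy at T
  have hgr : ∀ p' : Fin m, quota n v w p' - (gw w s T p' : ℚ)
      ≤ quota n v w p - (gw w s T p : ℚ) := by
    intro p'
    have := hs T p'
    rwa [hsT] at this
  have hsum : ∑ p', (quota n v w p' - (gw w s T p' : ℚ))
      ≤ (m : ℚ) * (quota n v w p - (gw w s T p : ℚ)) := by
    calc ∑ p', (quota n v w p' - (gw w s T p' : ℚ))
        ≤ ∑ _p' : Fin m, (quota n v w p - (gw w s T p : ℚ)) :=
          Finset.sum_le_sum fun p' _ => hgr p'
      _ = (m : ℚ) * (quota n v w p - (gw w s T p : ℚ)) := by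
          rw [Finset.sum_const]; simp [mul_comm]
  have hsum' : (w T : ℚ) ≤ ∑ p', (quota n v w p' - (gw w s T p' : ℚ)) := by
    rw [Finset.sum_sub_distrib, hq, hg]
    linarith
  have hwT : (1 : ℚ) ≤ (w T : ℚ) := by exact_mod_cast hw T
  have hm' : (0 : ℚ) < (m : ℚ) := by exact_mod_cast hm
  have hpos : (gw w s T p : ℚ) < quota n v w p := by
    by_contra h
    push_neg at h
    nlinarith
  have hwt : (w T : ℚ) ≤ (w t : ℚ) := by exact_mod_cast hmono t T htT
  have : (rep w s p : ℚ) = (gw w s T p : ℚ) + (w T : ℚ) := by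
    rw [hrep]; push_cast; ring
  linarith
end

section
/- The obtainable weighted-seat upper quota WUQ° implies WUQ-X: if a seat assignment s satisfies rep(p,s) ≤ u°(p) for every party p, where u°(p) = min{ r ∈ R(w)_{[k]} : r ≥ q(p) }, then for every party p, either rep(p,s) ≤ q(p), or for every seat t assigned to p, rep(p,s) − w_t < q(p). -/
open Finset

/-- WUQ° implies WUQ-X. Here the hypothesis rep(p,s) ≤ u°(p) is expressed as:
the representation of p is at most every subset-sum of seat weights that is at
least q(p). -/
theorem stmt17 (n k m : ℕ) (v : Fin m → ℕ) (w : Fin k → ℕ)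
    (hv : ∀ p, 1 ≤ v p) (hn : ∑ p, v p = n) (hw : ∀ t, 1 ≤ w t)
    (s : Fin k → Fin m)
    (hWUQo : ∀ p : Fin m, ∀ T : Finset (Fin k),
      quota n v w p ≤ ((∑ t ∈ T, w t : ℕ) : ℚ) → rep w s p ≤ ∑ t ∈ T, w t) :
    ∀ p : Fin m, (rep w s p : ℚ) ≤ quota n v w p ∨
      ∀ t : Fin k, s t = p → (rep w s p : ℚ) - (w t : ℚ) < quota n v w p := by
  intro p
  by_contra hcon
  push_neg at hcon
  obtain ⟨hq, t, hst, hge⟩ := hcon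
  -- T = seats assigned to p, minus t
  set A : Finset (Fin k) := Finset.univ.filter (fun t' => s t' = p) with hA
  have htA : t ∈ A := by simp [hA, hst]
  have hrepA : rep w s p = ∑ t' ∈ A, w t' := by
    simp [rep, hA, Finset.sum_filter]
  have hsub : ∑ t' ∈ A.erase t, w t' = rep w s p - w t := by
    rw [hrepA, ← Finset.add_sum_erase A w htA]
    omega
  have hwt : w t ≤ rep w s p := by
    rw [hrepA]
    exact Finset.single_le_sum (fun i _ => Nat.zero_le _) htA
  have hcast : ((∑ t' ∈ A.erase t, w t' : ℕ) : ℚ) = (rep w s p : ℚ) - (w t : ℚ) := by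
    rw [hsub]
    push_cast [hwt]
    ring
  have := hWUQo p (A.erase t) (by rw [hcast]; exact hge)
  rw [hsub] at this
  have := hw t
  omega
end

section
/- For every election instance with exactly two parties, there exists a seat assignment satisfying WUQ°: each party p receives total weight at most u°(p) = min{ r ∈ R(w)_{[k]} : r ≥ q(p) }. In particular, giving party 1 a subset of seats of total weight exactly u°(1) and party 2 the rest works, since rep(2) = ω − u°(1) ≤ ω − q(1) = q(2) ≤ u°(2). -/
open Finset

/-- For every two-party instance there is a seat assignment satisfying WUQ°:
each party's representation is at most u°(p), the least subset-sum of seat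
weights that is at least q(p). Moreover the witness gives party 1 total weight
exactly u°(1). -/
theorem stmt18 (n k : ℕ) (v : Fin 2 → ℕ) (w : Fin k → ℕ)
    (hv : ∀ p, 1 ≤ v p) (hn : ∑ p, v p = n) (hw : ∀ t, 1 ≤ w t) :
    ∃ s : Fin k → Fin 2,
      (∀ p : Fin 2, ∀ T : Finset (Fin k),
        quota n v w p ≤ ((∑ t ∈ T, w t : ℕ) : ℚ) → rep w s p ≤ ∑ t ∈ T, w t) ∧
      quota n v w 0 ≤ (rep w s 0 : ℚ) := by
  have hsum : v 0 + v 1 = n := by simpa [Fin.sum_univ_two] using hn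
  have hnpos : 0 < n := by have := hv 0; have := hv 1; omega
  have hnQ : (n : ℚ) ≠ 0 := Nat.cast_ne_zero.mpr hnpos.ne'
  set ω : ℕ := ∑ t, w t with hω
  have hωcast : ((ω : ℕ) : ℚ) = ∑ t, (w t : ℚ) := by push_cast [hω]; rfl
  have hq0 : quota n v w 0 ≤ (ω : ℚ) := by
    rw [quota, div_le_iff₀ (by exact_mod_cast hnpos), ← hωcast]
    have h1 : (v 0 : ℚ) ≤ (n : ℚ) := by exact_mod_cast (by omega : v 0 ≤ n)
    have h2 : (0:ℚ) ≤ (ω : ℚ) := by positivity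
    calc (ω:ℚ) * v 0 ≤ (ω:ℚ) * n := by apply mul_le_mul_of_nonneg_left h1 h2
      _ = (ω:ℚ) * n := rfl
  have hqsum : quota n v w 0 + quota n v w 1 = (ω : ℚ) := by
    rw [quota, quota, ← add_div, ← mul_add]
    have : ((v 0 : ℚ) + (v 1 : ℚ)) = (n : ℚ) := by exact_mod_cast hsum
    rw [this, ← hωcast]
    field_simp
  obtain ⟨T₀, hT₀, hmin⟩ := Finset.exists_min_image
    ((Finset.univ : Finset (Finset (Fin k))).filter
      (fun T => quota n v w 0 ≤ ((∑ t ∈ T, w t : ℕ) : ℚ)))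
    (fun T => ∑ t ∈ T, w t) ⟨Finset.univ, by simpa [← hωcast] using hq0⟩
  simp only [Finset.mem_filter, Finset.mem_univ, true_and] at hT₀ hmin
  set s : Fin k → Fin 2 := fun t => if t ∈ T₀ then 0 else 1 with hs
  have hrep0 : rep w s 0 = ∑ t ∈ T₀, w t := by
    rw [rep, ← Finset.sum_filter]
    apply Finset.sum_congr
    · ext t
      by_cases ht : t ∈ T₀ <;> simp [hs, ht]
    · intro _ _; rfl
  have hrepsum : rep w s 0 + rep w s 1 = ω := by
    rw [rep, rep, ← Finset.sum_add_distrib]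
    apply Finset.sum_congr rfl
    intro t _
    by_cases ht : t ∈ T₀ <;> simp [hs, ht]
  have hq0rep : quota n v w 0 ≤ (rep w s 0 : ℚ) := by rw [hrep0]; exact hT₀
  refine ⟨s, ?_, hq0rep⟩
  intro p T hT
  fin_cases p
  · have := hmin T hT
    simpa [hrep0] using this
  · have h1 : (rep w s 1 : ℚ) ≤ quota n v w 1 := by
      have : (rep w s 0 : ℚ) + (rep w s 1 : ℚ) = (ω : ℚ) := by exact_mod_cast hrepsum
      have := hq0rep
      linarith [hqsum]
    have h2 : (rep w s 1 : ℚ) ≤ ((∑ t ∈ T, w t : ℕ) : ℚ) := le_trans h1 hT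
    exact_mod_cast h2
end
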